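/- arXiv:2602.17230 — 2 statements merged into one kernel-verified Lean document; each statement's English description precedes it below -/
import Mathlib

section
/- For every integer s ≥ 1, setting μ = 18 + s, the following inequality of rational numbers holds: (17/20 − 3/2)² + (21/20 − 3/2)² + (6/5 − 3/2)² + (5/4 − 3/2)² + (27/20 − 3/2)² + (7/5 − 3/2)² + (29/20 − 3/2)² + (31/20 − 3/2)² + (8/5 − 3/2)² + (33/20 − 3/2)² + (7/4 − 3/2)² + (9/5 − 3/2)² + (39/20 − 3/2)² + (43/20 − 3/2)² + ∑_{l=1}^{s+4} ((2l + 2s + 7)/(2(s+4)) − 3/2)² ≤ (μ/12)·(43/20 − 17/20). -/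
lemma sumIcc1 (m : ℕ) : ∑ l ∈ Finset.Icc 1 m, (l : ℚ) = m * (m + 1) / 2 := by
  induction m with
  | zero => simp
  | succ n ih =>
    rw [Finset.sum_Icc_succ_top (by omega), ih]
    push_cast; ring

lemma sumIcc2 (m : ℕ) : ∑ l ∈ Finset.Icc 1 m, (l : ℚ) ^ 2 = m * (m + 1) * (2 * m + 1) / 6 := by
  induction m with
  | zero => simp
  | succ n ih =>
    rw [Finset.sum_Icc_succ_top (by omega), ih]
    push_cast; ring

theorem stmt_9 (s : ℕ) (hs : 1 ≤ s) :
    ((17/20 : ℚ) - 3/2) ^ 2 +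
      ((21/20 : ℚ) - 3/2) ^ 2 +
      ((6/5 : ℚ) - 3/2) ^ 2 +
      ((5/4 : ℚ) - 3/2) ^ 2 +
      ((27/20 : ℚ) - 3/2) ^ 2 +
      ((7/5 : ℚ) - 3/2) ^ 2 +
      ((29/20 : ℚ) - 3/2) ^ 2 +
      ((31/20 : ℚ) - 3/2) ^ 2 +
      ((8/5 : ℚ) - 3/2) ^ 2 +
      ((33/20 : ℚ) - 3/2) ^ 2 +
      ((7/4 : ℚ) - 3/2) ^ 2 +
      ((9/5 : ℚ) - 3/2) ^ 2 +
      ((39/20 : ℚ) - 3/2) ^ 2 +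
      ((43/20 : ℚ) - 3/2) ^ 2 +
      ∑ l ∈ Finset.Icc 1 (s + 4), ((2 * (l : ℚ) + 2 * (s : ℚ) + 7) / (2 * ((s : ℚ) + 4)) - 3/2) ^ 2
    ≤ ((18 + (s : ℚ)) / 12) * (43/20 - 17/20) := by
  have hd : (2 * ((s : ℚ) + 4)) ≠ 0 := by positivity
  have hstep : ∑ l ∈ Finset.Icc 1 (s + 4),
      ((2 * (l : ℚ) + 2 * (s : ℚ) + 7) / (2 * ((s : ℚ) + 4)) - 3/2) ^ 2
      = (∑ l ∈ Finset.Icc 1 (s + 4),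
        (4 * (l : ℚ) ^ 2 - 4 * ((s : ℚ) + 5) * l + ((s : ℚ) + 5) ^ 2))
        / (2 * ((s : ℚ) + 4)) ^ 2 := by
    rw [Finset.sum_div]
    refine Finset.sum_congr rfl fun l _ => ?_
    field_simp
    ring
  have hsplit : ∑ l ∈ Finset.Icc 1 (s + 4),
      (4 * (l : ℚ) ^ 2 - 4 * ((s : ℚ) + 5) * l + ((s : ℚ) + 5) ^ 2)
      = 4 * (∑ l ∈ Finset.Icc 1 (s + 4), (l : ℚ) ^ 2)
        - 4 * ((s : ℚ) + 5) * (∑ l ∈ Finset.Icc 1 (s + 4), (l : ℚ))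
        + ((s : ℚ) + 4) * ((s : ℚ) + 5) ^ 2 := by
    rw [Finset.sum_add_distrib, Finset.sum_sub_distrib, ← Finset.mul_sum, ← Finset.mul_sum,
      Finset.sum_const, Nat.card_Icc]
    simp only [nsmul_eq_mul]
    push_cast
    ring
  rw [hstep, hsplit, sumIcc1, sumIcc2]
  have hs' : (1 : ℚ) ≤ (s : ℚ) := by exact_mod_cast hs
  have h4 : (0 : ℚ) < (s : ℚ) + 4 := by linarith
  rw [← sub_nonneg]
  push_cast
  have key : ∀ x : ℚ, 0 < x + 4 →
      (18 + x) / 12 * (43 / 20 - 17 / 20) -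
      (((17:ℚ)/20 - 3/2) ^ 2 + (21/20 - 3/2) ^ 2 + (6/5 - 3/2) ^ 2 + (5/4 - 3/2) ^ 2 +
        (27/20 - 3/2) ^ 2 + (7/5 - 3/2) ^ 2 + (29/20 - 3/2) ^ 2 + (31/20 - 3/2) ^ 2 +
        (8/5 - 3/2) ^ 2 + (33/20 - 3/2) ^ 2 + (7/4 - 3/2) ^ 2 + (9/5 - 3/2) ^ 2 +
        (39/20 - 3/2) ^ 2 + (43/20 - 3/2) ^ 2 +
        (4 * ((x + 4) * ((x + 4) + 1) * (2 * ((x + 4)) + 1) / 6)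
          - 4 * (x + 5) * ((x + 4) * ((x + 4) + 1) / 2)
          + (x + 4) * (x + 5) ^ 2) / (2 * (x + 4)) ^ 2)
      = (3 * x + 2) * (x + 3) / (120 * (x + 4)) := by
    intro x hx
    have hx' : x + 4 ≠ 0 := ne_of_gt hx
    field_simp
    ring
  rw [key (s : ℚ) h4]
  positivity
end

section
/- Let p ≥ 2 be an even integer and set τ = 15 + p. Consider the τ rational numbers consisting of 17/18, 23/18, 25/18, 29/18, 31/18 together with 1 + (2k−1)/(2(p+9)) for 1 ≤ k ≤ p/2 + 5 and 2 − (2k−1)/(2(p+9)) for 1 ≤ k ≤ p/2 + 5. Let x̄ be their average (equal to (395 + 27p)/(270 + 18p)). Then the sum of (x − x̄)² over these τ numbers is at most (τ/12)·( (2 − 1/(2(p+9))) − 17/18 ). -/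
lemma sumsq (A B : ℚ) : ∀ n : ℕ, ∑ k ∈ Finset.Icc 1 n, (A + B*(k:ℚ))^2
    = (n:ℚ)*A^2 + A*B*(n:ℚ)*((n:ℚ)+1) + B^2*((n:ℚ)*((n:ℚ)+1)*(2*(n:ℚ)+1))/6 := by
  intro n
  induction n with
  | zero => simp
  | succ n ih =>
    rw [Finset.sum_Icc_succ_top (Nat.le_add_left 1 n), ih]
    push_cast
    ring

set_option maxHeartbeats 1600000 in
/-- Generalized Hertling inequality for the Tjurina spectrum of `J_{3,p}` (`p` even). -/
theorem stmt_17 (p : ℕ) (hp : 2 ≤ p) (hpe : Even p)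
    (τ : ℚ) (hτ : τ = 15 + (p : ℚ))
    (xbar : ℚ) (hxbar : xbar = (395 + 27 * (p : ℚ)) / (270 + 18 * (p : ℚ))) :
    ((17/18 : ℚ) - xbar) ^ 2 + ((23/18 : ℚ) - xbar) ^ 2 + ((25/18 : ℚ) - xbar) ^ 2 +
      ((29/18 : ℚ) - xbar) ^ 2 + ((31/18 : ℚ) - xbar) ^ 2 +
      ∑ k ∈ Finset.Icc 1 (p / 2 + 5),
        ((1 + (2 * (k : ℚ) - 1) / (2 * ((p : ℚ) + 9))) - xbar) ^ 2 +
      ∑ k ∈ Finset.Icc 1 (p / 2 + 5),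
        ((2 - (2 * (k : ℚ) - 1) / (2 * ((p : ℚ) + 9))) - xbar) ^ 2
    ≤ (τ / 12) * ((2 - 1 / (2 * ((p : ℚ) + 9))) - 17/18) := by
  obtain ⟨m, hm⟩ := hpe
  subst hm hτ hxbar
  have hx : (0:ℚ) ≤ (m:ℚ) := Nat.cast_nonneg m
  have hpc : ((m + m : ℕ) : ℚ) = 2*(m:ℚ) := by push_cast; ring
  have hn : (m + m) / 2 + 5 = m + 5 := by omega
  have hQ : (0:ℚ) < 2*(m:ℚ) + 9 := by linarith
  have hQ' : ((m+m:ℕ):ℚ) + 9 ≠ 0 := by rw [hpc]; linarith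
  have e1 : ∑ k ∈ Finset.Icc 1 ((m+m) / 2 + 5),
      ((1 + (2 * (k : ℚ) - 1) / (2 * (((m+m:ℕ) : ℚ) + 9))) - (395 + 27 * ((m+m:ℕ) : ℚ)) / (270 + 18 * ((m+m:ℕ) : ℚ))) ^ 2
      = ∑ k ∈ Finset.Icc 1 (m + 5),
      (((1 - 1/(2*(((m+m:ℕ):ℚ)+9)) - (395 + 27 * ((m+m:ℕ) : ℚ)) / (270 + 18 * ((m+m:ℕ) : ℚ))) + (1/(((m+m:ℕ):ℚ)+9))*(k:ℚ))^2) := by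
    rw [hn]
    refine Finset.sum_congr rfl fun k _ => ?_
    have h270 : (270:ℚ) + 18 * ((m+m:ℕ):ℚ) ≠ 0 := by rw [hpc]; linarith
    field_simp
    ring
  have e2 : ∑ k ∈ Finset.Icc 1 ((m+m) / 2 + 5),
      ((2 - (2 * (k : ℚ) - 1) / (2 * (((m+m:ℕ) : ℚ) + 9))) - (395 + 27 * ((m+m:ℕ) : ℚ)) / (270 + 18 * ((m+m:ℕ) : ℚ))) ^ 2
      = ∑ k ∈ Finset.Icc 1 (m + 5),
      (((2 + 1/(2*(((m+m:ℕ):ℚ)+9)) - (395 + 27 * ((m+m:ℕ) : ℚ)) / (270 + 18 * ((m+m:ℕ) : ℚ))) + (-(1/(((m+m:ℕ):ℚ)+9)))*(k:ℚ))^2) := by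
    rw [hn]
    refine Finset.sum_congr rfl fun k _ => ?_
    have h270 : (270:ℚ) + 18 * ((m+m:ℕ):ℚ) ≠ 0 := by rw [hpc]; linarith
    field_simp
    ring
  rw [e1, e2, sumsq, sumsq, hpc]
  push_cast
  set x : ℚ := (m:ℚ) with hxdef
  have h270 : (0:ℚ) < 270 + 18 * (2*x) := by linarith
  rw [← sub_nonneg]
  have h9 : (2*x + 9) ≠ 0 := ne_of_gt hQ
  have h15 : (2*x + 15) ≠ 0 := by positivity
  have h270' : (270:ℚ) + 18 * (2 * x) ≠ 0 := ne_of_gt h270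
  have key : (15 + 2 * x) / 12 * (2 - 1 / (2 * (2 * x + 9)) - 17 / 18) -
      ((17 / 18 - (395 + 27 * (2 * x)) / (270 + 18 * (2 * x))) ^ 2 +
                  (23 / 18 - (395 + 27 * (2 * x)) / (270 + 18 * (2 * x))) ^ 2 +
                (25 / 18 - (395 + 27 * (2 * x)) / (270 + 18 * (2 * x))) ^ 2 +
              (29 / 18 - (395 + 27 * (2 * x)) / (270 + 18 * (2 * x))) ^ 2 +
            (31 / 18 - (395 + 27 * (2 * x)) / (270 + 18 * (2 * x))) ^ 2 +
          ((x + 5) * (1 - 1 / (2 * (2 * x + 9)) - (395 + 27 * (2 * x)) / (270 + 18 * (2 * x))) ^ 2 +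
              (1 - 1 / (2 * (2 * x + 9)) - (395 + 27 * (2 * x)) / (270 + 18 * (2 * x))) * (1 / (2 * x + 9)) * (x + 5) *
                (x + 5 + 1) +
            (1 / (2 * x + 9)) ^ 2 * ((x + 5) * (x + 5 + 1) * (2 * (x + 5) + 1)) / 6) +
        ((x + 5) * (2 + 1 / (2 * (2 * x + 9)) - (395 + 27 * (2 * x)) / (270 + 18 * (2 * x))) ^ 2 +
            (2 + 1 / (2 * (2 * x + 9)) - (395 + 27 * (2 * x)) / (270 + 18 * (2 * x))) * -(1 / (2 * x + 9)) * (x + 5) *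
              (x + 5 + 1) +
          (-(1 / (2 * x + 9))) ^ 2 * ((x + 5) * (x + 5 + 1) * (2 * (x + 5) + 1)) / 6))
      = (576*x^5 + 19776*x^4 + 269088*x^3 + 1782720*x^2 + 5678100*x + 6925500)
        / (3888 * (2*x + 9)^2 * (2*x + 15)^2) := by
    field_simp
    ring
  rw [key]
  positivity
end
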